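/- The set of interval-closed sets of [m] × [n] is in bijection with the set of bicolored Motzkin paths M of length m + n (paths from (0,0) to (m+n,0) with steps u=(1,1), d=(1,−1), and two colors of horizontal steps h₁, h₂, never going below the x-axis) satisfying: the number of u steps plus h₁ steps equals m, the number of d steps plus h₂ steps equals n, and no h₂ step at height 0 is immediately followed by an h₁ step. -/

import Mathlib

/-- A subset `I` of a poset is interval-closed if for all `x, y ∈ I` and `z`
with `x < z < y`, we have `z ∈ I`. -/
def IsIntervalClosed {P : Type*} [PartialOrder P] (I : Finset P) : Prop :=
  ∀ x ∈ I, ∀ y ∈ I, ∀ z : P, x < z → z < y → z ∈ I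

/-- Steps of a bicolored Motzkin path: up, down, and two colors of horizontal steps. -/
inductive BMStep : Type
  | u : BMStep
  | d : BMStep
  | h1 : BMStep
  | h2 : BMStep
  deriving DecidableEq

/-- Vertical displacement of a step. -/
def BMStep.wt : BMStep → ℤ
  | .u => 1
  | .d => -1
  | _ => 0

/-- Height of the path `M` after its first `k` steps. -/
def hgt (M : List BMStep) (k : ℕ) : ℤ := ((M.take k).map BMStep.wt).sum

/-- `M` is a bicolored Motzkin path: it never goes below the x-axis and ends at height 0. -/
def IsBMPath (M : List BMStep) : Prop :=
  (∀ k : ℕ, 0 ≤ hgt M k) ∧ hgt M M.length = 0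

/-- No `h₂` step at height 0 (on the x-axis) is immediately followed by an `h₁` step. -/
def NoH2ThenH1 (M : List BMStep) : Prop :=
  ∀ k : ℕ, ¬ (hgt M k = 0 ∧ M[k]? = some BMStep.h2 ∧ M[k + 1]? = some BMStep.h1)

namespace ICSbij

def isA : BMStep → Bool
  | .u => true
  | .h2 => true
  | _ => false

def isB : BMStep → Bool
  | .d => true
  | .h2 => true
  | _ => false

/-- number of `u`/`h2` steps among the first `t` steps -/
def NA (M : List BMStep) (t : ℕ) : ℕ := (M.take t).countP isA

/-- number of `d`/`h2` steps among the first `t` steps -/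
def NB (M : List BMStep) (t : ℕ) : ℕ := (M.take t).countP isB

lemma countP_A (l : List BMStep) : l.countP isA = l.count .u + l.count .h2 := by
  induction l with
  | nil => rfl
  | cons s l ih => cases s <;> simp [List.countP_cons, List.count_cons, ih, isA] <;> omega

lemma countP_B (l : List BMStep) : l.countP isB = l.count .d + l.count .h2 := by
  induction l with
  | nil => rfl
  | cons s l ih => cases s <;> simp [List.countP_cons, List.count_cons, ih, isB] <;> omega

lemma sum_wt (l : List BMStep) :
    (l.map BMStep.wt).sum = (l.countP isA : ℤ) - (l.countP isB : ℤ) := by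
  induction l with
  | nil => rfl
  | cons s l ih => cases s <;> simp [List.countP_cons, ih, isA, isB, BMStep.wt] <;> ring

lemma hgt_eq (M : List BMStep) (t : ℕ) : hgt M t = (NA M t : ℤ) - (NB M t : ℤ) :=
  sum_wt _

lemma NA_zero (M : List BMStep) : NA M 0 = 0 := rfl
lemma NB_zero (M : List BMStep) : NB M 0 = 0 := rfl

lemma take_succ' (M : List BMStep) (t : ℕ) :
    M.take (t+1) = M.take t ++ M[t]?.toList := by
  rw [List.take_succ]

lemma NA_succ_none {M : List BMStep} {t : ℕ} (h : M[t]? = none) :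
    NA M (t+1) = NA M t := by
  unfold NA; rw [take_succ', h]; simp
lemma NB_succ_none {M : List BMStep} {t : ℕ} (h : M[t]? = none) :
    NB M (t+1) = NB M t := by
  unfold NB; rw [take_succ', h]; simp

lemma NA_succ_some {M : List BMStep} {t : ℕ} {s : BMStep} (h : M[t]? = some s) :
    NA M (t+1) = NA M t + (if isA s then 1 else 0) := by
  unfold NA; rw [take_succ', h, List.countP_append]; simp [List.countP_cons]
lemma NB_succ_some {M : List BMStep} {t : ℕ} {s : BMStep} (h : M[t]? = some s) :
    NB M (t+1) = NB M t + (if isB s then 1 else 0) := by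
  unfold NB; rw [take_succ', h, List.countP_append]; simp [List.countP_cons]

lemma exists_get? {M : List BMStep} {t : ℕ} (h : t < M.length) : ∃ s, M[t]? = some s := by
  rw [List.getElem?_eq_getElem h]; exact ⟨_, rfl⟩

lemma NA_succ_le (M : List BMStep) (t : ℕ) :
    NA M t ≤ NA M (t+1) ∧ NA M (t+1) ≤ NA M t + 1 := by
  cases h : M[t]? with
  | none => rw [NA_succ_none h]; omega
  | some s => rw [NA_succ_some h]; split <;> omega
lemma NB_succ_le (M : List BMStep) (t : ℕ) :
    NB M t ≤ NB M (t+1) ∧ NB M (t+1) ≤ NB M t + 1 := by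
  cases h : M[t]? with
  | none => rw [NB_succ_none h]; omega
  | some s => rw [NB_succ_some h]; split <;> omega

lemma NA_mono (M : List BMStep) {s t : ℕ} (h : s ≤ t) : NA M s ≤ NA M t := by
  induction t with
  | zero => interval_cases s; exact le_rfl
  | succ t ih =>
      rcases Nat.eq_or_lt_of_le h with rfl | h'
      · exact le_rfl
      · exact le_trans (ih (by omega)) (NA_succ_le M t).1
lemma NB_mono (M : List BMStep) {s t : ℕ} (h : s ≤ t) : NB M s ≤ NB M t := by
  induction t with
  | zero => interval_cases s; simp
  | succ t ih =>
      rcases Nat.eq_or_lt_of_le h with rfl | h'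
      · exact le_rfl
      · exact le_trans (ih (by omega)) (NB_succ_le M t).1

lemma NA_lip (M : List BMStep) {s t : ℕ} (h : s ≤ t) : NA M t ≤ NA M s + (t - s) := by
  induction t with
  | zero => interval_cases s; simp
  | succ t ih =>
      rcases Nat.eq_or_lt_of_le h with rfl | h'
      · omega
      · have := (NA_succ_le M t).2; have := ih (by omega); omega
lemma NB_lip (M : List BMStep) {s t : ℕ} (h : s ≤ t) : NB M t ≤ NB M s + (t - s) := by
  induction t with
  | zero => interval_cases s; simp
  | succ t ih =>
      rcases Nat.eq_or_lt_of_le h with rfl | h'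
      · omega
      · have := (NB_succ_le M t).2; have := ih (by omega); omega

lemma NA_le_self (M : List BMStep) (t : ℕ) : NA M t ≤ t := by
  have h := NA_lip M (Nat.zero_le t); simpa [NA_zero] using h
lemma NB_le_self (M : List BMStep) (t : ℕ) : NB M t ≤ t := by
  have h := NB_lip M (Nat.zero_le t); simpa [NB_zero] using h

lemma NA_sub_mono (M : List BMStep) {s t : ℕ} (h : s ≤ t) :
    s - NA M s ≤ t - NA M t := by
  have h1 := NA_lip M h; have := NA_le_self M s; omega

lemma NB_sub_mono (M : List BMStep) {s t : ℕ} (h : s ≤ t) :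
    s - NB M s ≤ t - NB M t := by
  have h1 := NB_lip M h; have := NB_le_self M s; omega

lemma NA_stable (M : List BMStep) {t : ℕ} (h : M.length ≤ t) :
    NA M t = NA M M.length := by
  unfold NA; rw [List.take_of_length_le h, List.take_of_length_le le_rfl]
lemma NB_stable (M : List BMStep) {t : ℕ} (h : M.length ≤ t) :
    NB M t = NB M M.length := by
  unfold NB; rw [List.take_of_length_le h, List.take_of_length_le le_rfl]

lemma NA_le_total (M : List BMStep) (t : ℕ) : NA M t ≤ NA M M.length := by
  rcases le_total t M.length with h | h
  · exact NA_mono M h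
  · rw [NA_stable M h]
lemma NB_le_total (M : List BMStep) (t : ℕ) : NB M t ≤ NB M M.length := by
  rcases le_total t M.length with h | h
  · exact NB_mono M h
  · rw [NB_stable M h]

/-- The conditions on the path side, repackaged. -/
structure Good (m n : ℕ) (M : List BMStep) : Prop where
  len : M.length = m + n
  naL : NA M (m+n) = n
  nbL : NB M (m+n) = n
  ble : ∀ t, NB M t ≤ NA M t
  noh : NoH2ThenH1 M

lemma length_eq_counts (M : List BMStep) :
    M.length = M.count .u + M.count .d + M.count .h1 + M.count .h2 := by
  induction M with
  | nil => rfl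
  | cons s l ih => cases s <;> simp [List.count_cons, ih] <;> omega

lemma good_iff (m n : ℕ) (M : List BMStep) :
    (IsBMPath M ∧ NoH2ThenH1 M ∧
      M.count BMStep.u + M.count BMStep.h1 = m ∧
      M.count BMStep.d + M.count BMStep.h2 = n) ↔ Good m n M := by
  constructor
  · rintro ⟨⟨hpos, hend⟩, hnoh, hcu, hcd⟩
    have hNAB : NA M M.length = NB M M.length := by
      have := hgt_eq M M.length; omega
    have hNB : NB M M.length = n := by
      unfold NB; rw [List.take_of_length_le le_rfl, countP_B]; exact hcd
    have hNA : NA M M.length = n := hNAB.trans hNB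
    have hud : M.count .u = M.count .d := by
      have h1 : NA M M.length = M.count .u + M.count .h2 := by
        unfold NA; rw [List.take_of_length_le le_rfl, countP_A]
      have h2 : NB M M.length = M.count .d + M.count .h2 := by
        unfold NB; rw [List.take_of_length_le le_rfl, countP_B]
      omega
    have hlen : M.length = m + n := by
      have := length_eq_counts M
      omega
    refine ⟨hlen, ?_, ?_, ?_, hnoh⟩
    · rw [← hlen]; exact hNA
    · rw [← hlen]; exact hNB
    · intro t; have := hgt_eq M t; have := hpos t; omega
  · rintro ⟨hlen, hNA, hNB, hble, hnoh⟩
    have h2 : NB M M.length = M.count .d + M.count .h2 := by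
      unfold NB; rw [List.take_of_length_le le_rfl, countP_B]
    have h1 : NA M M.length = M.count .u + M.count .h2 := by
      unfold NA; rw [List.take_of_length_le le_rfl, countP_A]
    have hNA' : NA M M.length = n := by rw [hlen]; exact hNA
    have hNB' : NB M M.length = n := by rw [hlen]; exact hNB
    have hcd : M.count .d + M.count .h2 = n := by omega
    have hcu : M.count .u + M.count .h1 = m := by
      have := length_eq_counts M
      omega
    refine ⟨⟨?_, ?_⟩, hnoh, hcu, hcd⟩
    · intro k; have := hgt_eq M k; have := hble k; omega
    · have := hgt_eq M M.length; omega

lemma Good.na_le_n {m n : ℕ} {M : List BMStep} (g : Good m n M) (t : ℕ) : NA M t ≤ n := by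
  have := NA_le_total M t
  have : NA M M.length = n := by rw [g.len]; exact g.naL
  have := NA_le_total M t; omega
lemma Good.nb_le_n {m n : ℕ} {M : List BMStep} (g : Good m n M) (t : ℕ) : NB M t ≤ n := by
  have : NB M M.length = n := by rw [g.len]; exact g.nbL
  have := NB_le_total M t; omega

end ICSbij

namespace Part2
open ICSbij

/-- The interval-closed set decoded from a path. -/
def decode (m n : ℕ) (M : List BMStep) : Finset (Fin m × Fin n) :=
  Finset.univ.filter fun x =>
    (x.2 : ℕ) + 1 ≤ NA M (m - (x.1 : ℕ) + (x.2 : ℕ)) ∧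
    NB M (m - (x.1 : ℕ) + (x.2 : ℕ)) ≤ (x.2 : ℕ)

lemma mem_decode {m n : ℕ} {M : List BMStep} {x : Fin m × Fin n} :
    x ∈ decode m n M ↔
      (x.2 : ℕ) + 1 ≤ NA M (m - (x.1 : ℕ) + (x.2 : ℕ)) ∧
      NB M (m - (x.1 : ℕ) + (x.2 : ℕ)) ≤ (x.2 : ℕ) := by
  simp [decode]

lemma decode_ics (m n : ℕ) (M : List BMStep) : IsIntervalClosed (decode m n M) := by
  intro x hx y hy z hxz hzy
  rw [mem_decode] at hx hy ⊢
  obtain ⟨hx1, hx2⟩ := hx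
  obtain ⟨hy1, hy2⟩ := hy
  have hxz1 : (x.1 : ℕ) ≤ z.1 := by exact_mod_cast (le_of_lt hxz).1
  have hxz2 : (x.2 : ℕ) ≤ z.2 := by exact_mod_cast (le_of_lt hxz).2
  have hzy1 : (z.1 : ℕ) ≤ y.1 := by exact_mod_cast (le_of_lt hzy).1
  have hzy2 : (z.2 : ℕ) ≤ y.2 := by exact_mod_cast (le_of_lt hzy).2
  have hz1m : (z.1 : ℕ) < m := z.1.isLt
  have hx1m : (x.1 : ℕ) < m := x.1.isLt
  have hy1m : (y.1 : ℕ) < m := y.1.isLt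
  constructor
  · rcases le_total (m - (z.1 : ℕ) + (z.2 : ℕ)) (m - (y.1 : ℕ) + (y.2 : ℕ)) with h | h
    · have := NA_lip M h
      omega
    · have := NA_mono M h
      omega
  · rcases le_total (m - (x.1 : ℕ) + (x.2 : ℕ)) (m - (z.1 : ℕ) + (z.2 : ℕ)) with h | h
    · have := NB_lip M h
      omega
    · have := NB_mono M h
      omega

/-- the height of the upper boundary word after its `r+1`-st east step -/
def alM (M : List BMStep) (n r : ℕ) : ℕ := Nat.findGreatest (fun v => v ≤ NA M (r + v)) n

/-- the height of the lower boundary word before its `r+1`-st east step -/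
noncomputable def beM (M : List BMStep) (r : ℕ) : ℕ := sInf {j | NB M (r + 1 + j) ≤ j}

variable {m n : ℕ} {M : List BMStep}

lemma beM_nonempty (g : Good m n M) (r : ℕ) : ({j | NB M (r + 1 + j) ≤ j} : Set ℕ).Nonempty :=
  ⟨n, g.nb_le_n _⟩

lemma beM_le_iff (g : Good m n M) {r j : ℕ} : beM M r ≤ j ↔ NB M (r + 1 + j) ≤ j := by
  constructor
  · intro h
    have hm : NB M (r + 1 + beM M r) ≤ beM M r := Nat.sInf_mem (beM_nonempty g r)
    have := NB_lip M (show r + 1 + beM M r ≤ r + 1 + j by omega)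
    omega
  · intro h
    exact Nat.sInf_le h

lemma alM_le_n (r : ℕ) : alM M n r ≤ n := Nat.findGreatest_le n

lemma alM_spec' (r : ℕ) : alM M n r ≤ NA M (r + alM M n r) := by
  have h := (Nat.findGreatest_eq_iff.mp (rfl : alM M n r = alM M n r)).2.1
  rcases Nat.eq_zero_or_pos (alM M n r) with h0 | h0
  · omega
  · exact h (by omega)

lemma alM_max' {r v : ℕ} (g : Good m n M) (h : alM M n r < v) : ¬ (v ≤ NA M (r + v)) := by
  rcases le_or_gt v n with hv | hv
  · exact (Nat.findGreatest_eq_iff.mp (rfl : alM M n r = alM M n r)).2.2 h hv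
  · have := g.na_le_n (r + v); omega

lemma alM_ge_iff (g : Good m n M) {r j : ℕ} :
    j + 1 ≤ alM M n r ↔ j + 1 ≤ NA M (r + 1 + j) := by
  have hidx : r + (j + 1) = r + 1 + j := by omega
  constructor
  · intro h
    have h1 := alM_spec' (M := M) (n := n) r
    have h2 := NA_lip M (show r + 1 + j ≤ r + alM M n r by omega)
    omega
  · intro h
    refine Nat.le_findGreatest (le_trans h (g.na_le_n _)) ?_
    show j + 1 ≤ NA M (r + (j+1))
    rw [hidx]; exact h

lemma alM_mono (g : Good m n M) {r r' : ℕ} (h : r ≤ r') : alM M n r ≤ alM M n r' := by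
  rcases Nat.eq_zero_or_pos (alM M n r) with h0 | h0
  · omega
  · have h1 := alM_spec' (M := M) (n := n) r
    have h2 := NA_mono M (show r + alM M n r ≤ r' + alM M n r by omega)
    exact Nat.le_findGreatest (alM_le_n r) (by omega)

lemma beM_le_alM (g : Good m n M) (r : ℕ) : beM M r ≤ alM M n r := by
  have h1 : ¬ (alM M n r + 1 ≤ NA M (r + 1 + alM M n r)) := by
    have h := alM_max' (g := g) (r := r) (v := alM M n r + 1) (by omega)
    rw [show r + (alM M n r + 1) = r + 1 + alM M n r from by omega] at h
    exact h
  rw [beM_le_iff g]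
  have h2 := g.ble (r + 1 + alM M n r)
  omega

lemma mem_decode_iff (g : Good m n M) (i : Fin m) (j : Fin n) :
    ((i, j) ∈ decode m n M) ↔
      beM M (m - 1 - (i : ℕ)) ≤ (j : ℕ) ∧ (j : ℕ) + 1 ≤ alM M n (m - 1 - (i : ℕ)) := by
  rw [mem_decode]
  have him : (i : ℕ) < m := i.isLt
  have ht : m - ((i, j).1 : ℕ) + ((i, j).2 : ℕ) = (m - 1 - (i : ℕ)) + 1 + (j : ℕ) := by
    simp only []; omega
  rw [ht, alM_ge_iff g, beM_le_iff g]
  tauto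

/-- characterization of flat spots of `NA` -/
lemma PC (g : Good m n M) {k : ℕ} (hk : k < m + n) :
    NA M (k+1) = NA M k ↔ ∃ r < m, alM M n r + r = k := by
  constructor
  · intro hflat
    have hle := NA_le_self M k
    have hrm : k - NA M k < m := by
      have h1 := NA_sub_mono M (show k + 1 ≤ m + n by omega)
      have h2 : NA M (m + n) = n := g.naL
      omega
    refine ⟨k - NA M k, hrm, ?_⟩
    have hle2 : alM M n (k - NA M k) ≤ NA M k := by
      by_contra hc
      push_neg at hc
      have h3 := (alM_ge_iff (g := g) (r := k - NA M k) (j := NA M k)).mp hc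
      rw [show k - NA M k + 1 + NA M k = k + 1 from by omega] at h3
      omega
    have hge2 : NA M k ≤ alM M n (k - NA M k) := by
      rcases Nat.eq_zero_or_pos (NA M k) with h0 | h0
      · omega
      · have h4 : (NA M k - 1) + 1 ≤ NA M (k - NA M k + 1 + (NA M k - 1)) := by
          rw [show k - NA M k + 1 + (NA M k - 1) = k from by omega]
          omega
        have := (alM_ge_iff (g := g) (r := k - NA M k) (j := NA M k - 1)).mpr h4
        omega
    omega
  · rintro ⟨r, hrm, hpk⟩
    have h1 : alM M n r ≤ NA M k := by
      have h := alM_spec' (M := M) (n := n) r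
      rw [show r + alM M n r = k from by omega] at h
      exact h
    have h2 : NA M (k+1) ≤ alM M n r := by
      have h3 := alM_max' (g := g) (r := r) (v := alM M n r + 1) (by omega)
      rw [show r + (alM M n r + 1) = k + 1 from by omega] at h3
      omega
    have := NA_mono M (show k ≤ k + 1 by omega)
    omega

/-- characterization of flat spots of `NB` -/
lemma QC (g : Good m n M) {k : ℕ} (hk : k < m + n) :
    NB M (k+1) = NB M k ↔ ∃ r < m, beM M r + r = k := by
  constructor
  · intro hflat
    have hle := NB_le_self M k
    have hrm : k - NB M k < m := by
      have h1 := NB_sub_mono M (show k + 1 ≤ m + n by omega)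
      have h2 : NB M (m + n) = n := g.nbL
      omega
    refine ⟨k - NB M k, hrm, ?_⟩
    have hval : beM M (k - NB M k) = NB M k := by
      apply le_antisymm
      · rw [beM_le_iff g]
        rw [show k - NB M k + 1 + NB M k = k + 1 from by omega]
        omega
      · by_contra hc
        push_neg at hc
        have hmem : NB M (k - NB M k + 1 + beM M (k - NB M k)) ≤ beM M (k - NB M k) :=
          Nat.sInf_mem (beM_nonempty g _)
        have hsub := NB_sub_mono M
          (show k - NB M k + 1 + beM M (k - NB M k) ≤ k by omega)
        omega
    omega
  · rintro ⟨r, hrm, hqk⟩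
    have hmem : NB M (r + 1 + beM M r) ≤ beM M r := Nat.sInf_mem (beM_nonempty g r)
    rw [show r + 1 + beM M r = k + 1 from by omega] at hmem
    have h2 : beM M r ≤ NB M k := by
      rcases Nat.eq_zero_or_pos (beM M r) with h0 | h0
      · omega
      · by_contra hc
        push_neg at hc
        have : beM M r ≤ beM M r - 1 := by
          rw [beM_le_iff g]
          have hb := NB_mono M (show r + 1 + (beM M r - 1) ≤ k by omega)
          omega
        omega
    have := NB_mono M (show k ≤ k + 1 by omega)
    omega

end Part2

namespace Part3
open ICSbij Part2

variable {m n : ℕ} {M : List BMStep}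

lemma hgt_zero_of (h : NA M k = NB M k) : hgt M k = 0 := by
  rw [hgt_eq]; omega

/-- Key witness lemma: if `NA` has value `v` and is flat at `s = r' + v`,
then there is a cell of the decoded set in a column `≥ m-1-r'` at height `≥ v`. -/
lemma W (g : Good m n M) :
    ∀ s r' v : ℕ, r' < m → s = r' + v → 1 ≤ v → s + 1 ≤ m + n →
      NA M s = v → NA M (s+1) = v →
      ∃ (i : Fin m) (j : Fin n), ((i, j) ∈ decode m n M ∧
        m - 1 - (i : ℕ) ≤ r' ∧ v ≤ (j : ℕ) + 1) := by
  intro s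
  induction s using Nat.strong_induction_on with
  | _ s IH =>
    intro r' v hrm hs hv hsL hNAs hNAs1
    have hlen : M.length = m + n := g.len
    have hvn : v ≤ n := by have := g.na_le_n s; omega
    rcases lt_or_eq_of_le (g.ble s) with hlt | heq
    · -- NB s < NA s : direct witness in column m-1-r'
      refine ⟨⟨m - 1 - r', by omega⟩, ⟨v - 1, by omega⟩, ?_, by simp; omega, by simp; omega⟩
      rw [mem_decode]
      simp only []
      rw [show m - (m - 1 - r') + (v - 1) = s from by omega]
      omega
    · -- NB s = NA s
      -- step at s must be h1
      obtain ⟨s₁, hs₁⟩ := exists_get? (M := M) (t := s) (by omega)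
      have ha1 := NA_succ_some hs₁
      have hb1 := NB_succ_some hs₁
      have hstep1 : s₁ = BMStep.h1 := by
        have hble1 := g.ble (s+1)
        cases s₁ <;> simp [isA, isB] at ha1 hb1 <;> first | rfl | (exfalso; omega)
      subst hstep1
      -- consider the step at s-1
      have hs1 : 1 ≤ s := by omega
      obtain ⟨s₀, hs₀⟩ := exists_get? (M := M) (t := s - 1) (by omega)
      have ha0 := NA_succ_some hs₀
      have hb0 := NB_succ_some hs₀
      rw [show s - 1 + 1 = s from by omega] at ha0 hb0
      have hself := NA_le_self M (s-1)
      cases s₀ with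
      | u =>
          exfalso
          simp [isA, isB] at ha0 hb0
          have := g.ble (s-1)
          omega
      | h2 =>
          exfalso
          simp [isA, isB] at ha0 hb0
          refine g.noh (s-1) ⟨hgt_zero_of (k := s - 1) (by omega), hs₀, ?_⟩
          rw [show s - 1 + 1 = s from by omega]
          exact hs₁
      | d =>
          simp [isA, isB] at ha0 hb0
          have hr1 : 1 ≤ r' := by omega
          refine ⟨⟨m - r', by omega⟩, ⟨v - 1, by omega⟩, ?_, by simp; omega, by simp; omega⟩
          rw [mem_decode]
          simp only []
          rw [show m - (m - r') + (v - 1) = s - 1 from by omega]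
          omega
      | h1 =>
          simp [isA, isB] at ha0 hb0
          have hr1 : 1 ≤ r' := by omega
          obtain ⟨i, j, hmem, hi, hj⟩ :=
            IH (s-1) (by omega) (r' - 1) v (by omega) (by omega) hv (by omega)
              (by omega) (by rw [show s - 1 + 1 = s from by omega]; omega)
          exact ⟨i, j, hmem, by omega, hj⟩

/-- `alM` is determined by the decoded interval-closed set. -/
lemma alM_det (g : Good m n M) {r : ℕ} (hr : r < m) :
    alM M n r = (decode m n M).sup
      (fun x => if m - 1 - r ≤ (x.1 : ℕ) then (x.2 : ℕ) + 1 else 0) := by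
  apply le_antisymm
  · -- alM ≤ sup
    rcases Nat.eq_zero_or_pos (alM M n r) with h0 | h0
    · omega
    · -- find the last s with s ≤ NA s + r
      set P : ℕ → Prop := fun s => s ≤ NA M s + r with hP
      have hP0 : P (r + alM M n r) := by
        have := alM_spec' (M := M) (n := n) r
        simp only [hP]; omega
      have hPL : ¬ P (m + n) := by
        simp only [hP]
        have := g.naL
        omega
      have hbound : r + alM M n r ≤ m + n := by
        have := alM_le_n (M := M) (n := n) r
        omega
      set s := Nat.findGreatest P (m+n) with hsdef
      have hs_ge : r + alM M n r ≤ s := Nat.le_findGreatest hbound hP0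
      have hs_le : s ≤ m + n := Nat.findGreatest_le _
      have hs_spec : P s := by
        have h := (Nat.findGreatest_eq_iff.mp hsdef.symm).2.1
        exact h (by omega)
      have hs_ne : s ≠ m + n := fun h => hPL (h ▸ hs_spec)
      have hs_max : ¬ P (s + 1) :=
        (Nat.findGreatest_eq_iff.mp hsdef.symm).2.2 (by omega) (by omega)
      simp only [hP] at hs_spec hs_max
      push_neg at hs_max
      have hmono := (NA_succ_le M s).1
      have hflat : NA M s = s - r ∧ NA M (s+1) = s - r := by omega
      have hge : alM M n r ≤ s - r := by
        have := NA_mono M (show r + alM M n r ≤ s by omega)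
        have := alM_spec' (M := M) (n := n) r
        omega
      obtain ⟨i, j, hmem, hi, hj⟩ := W g s r (s - r) hr (by omega) (by omega) (by omega)
        hflat.1 hflat.2
      calc alM M n r ≤ (j : ℕ) + 1 := by omega
      _ = (if m - 1 - r ≤ ((i, j).1 : ℕ) then ((i, j).2 : ℕ) + 1 else 0) := by
            have : (i:ℕ) < m := i.isLt
            rw [if_pos (by simp only []; omega)]
      _ ≤ _ := Finset.le_sup (f := fun x : Fin m × Fin n =>
            if m - 1 - r ≤ (x.1 : ℕ) then (x.2 : ℕ) + 1 else 0) hmem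
  · -- sup ≤ alM
    apply Finset.sup_le
    intro x hx
    split
    · next hcond =>
        have hx1 : (x.1 : ℕ) < m := x.1.isLt
        have h := (mem_decode_iff g x.1 x.2).mp (by simpa using hx)
        calc (x.2 : ℕ) + 1 ≤ alM M n (m - 1 - (x.1:ℕ)) := h.2
        _ ≤ alM M n r := alM_mono g (by omega)
    · exact Nat.zero_le _

lemma beM_det {M₁ M₂ : List BMStep} (g₁ : Good m n M₁) (g₂ : Good m n M₂)
    (hd : decode m n M₁ = decode m n M₂)
    (hal : ∀ r, r < m → alM M₁ n r = alM M₂ n r) {r : ℕ} (hr : r < m) :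
    beM M₁ r = beM M₂ r := by
  by_cases hcol : ∃ j : Fin n, ((⟨m - 1 - r, by omega⟩ : Fin m), j) ∈ decode m n M₁
  · obtain ⟨j, hj⟩ := hcol
    have hidx : m - 1 - ((⟨m - 1 - r, by omega⟩ : Fin m) : ℕ) = r := by simp; omega
    have h1 := (mem_decode_iff g₁ _ _).mp hj
    rw [hidx] at h1
    have h2 := (mem_decode_iff g₂ _ _).mp (hd ▸ hj)
    rw [hidx] at h2
    -- both beM's are the min of the same column
    have key : ∀ (M₁' M₂' : List BMStep) (g₁' : Good m n M₁') (g₂' : Good m n M₂'),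
        decode m n M₁' = decode m n M₂' →
        alM M₁' n r = alM M₂' n r →
        beM M₁' r ≤ (j:ℕ) → (j:ℕ) + 1 ≤ alM M₁' n r →
        beM M₂' r ≤ beM M₁' r := by
      intro M₁' M₂' g₁' g₂' hd' hal' hb1 ha1
      have hjn : beM M₁' r < n := by
        have : (j : ℕ) < n := j.isLt
        omega
      have hcell : ((⟨m - 1 - r, by omega⟩ : Fin m), (⟨beM M₁' r, by omega⟩ : Fin n))
          ∈ decode m n M₁' := by
        rw [mem_decode_iff g₁']
        rw [hidx]
        simp only [Fin.val_mk]
        exact ⟨le_rfl, by omega⟩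
      rw [hd'] at hcell
      have := (mem_decode_iff g₂' _ _).mp hcell
      rw [hidx] at this
      simpa using this.1
    have e1 := key M₁ M₂ g₁ g₂ hd (hal r hr) h1.1 h1.2
    have e2 := key M₂ M₁ g₂ g₁ hd.symm (hal r hr).symm h2.1 h2.2
    omega
  · -- empty column: beM = alM on both sides
    have hempty : ∀ (M' : List BMStep) (g' : Good m n M'),
        decode m n M' = decode m n M₁ → beM M' r = alM M' n r := by
      intro M' g' hd'
      apply le_antisymm (beM_le_alM g' r)
      by_contra hc
      push_neg at hc
      have hjn : beM M' r < n := by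
        have := alM_le_n (M := M') (n := n) r
        omega
      refine hcol ⟨⟨beM M' r, by omega⟩, ?_⟩
      rw [← hd']
      rw [mem_decode_iff g']
      have hidx : m - 1 - ((⟨m - 1 - r, by omega⟩ : Fin m) : ℕ) = r := by simp; omega
      rw [hidx]
      simp only [Fin.val_mk]
      exact ⟨le_rfl, by omega⟩
    rw [hempty M₁ g₁ rfl, hempty M₂ g₂ hd.symm, hal r hr]

/-- paths with the same decoded set are equal -/
lemma decode_inj {M₁ M₂ : List BMStep} (g₁ : Good m n M₁) (g₂ : Good m n M₂)
    (hd : decode m n M₁ = decode m n M₂) : M₁ = M₂ := by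
  have hal : ∀ r, r < m → alM M₁ n r = alM M₂ n r := by
    intro r hr
    rw [alM_det g₁ hr, alM_det g₂ hr, hd]
  have hbe : ∀ r, r < m → beM M₁ r = beM M₂ r := fun r hr => beM_det g₁ g₂ hd hal hr
  have hl1 := g₁.len
  have hl2 := g₂.len
  apply List.ext_getElem?
  intro k
  rcases le_or_gt (m+n) k with hk | hk
  · rw [List.getElem?_eq_none_iff.2 (by omega : M₁.length ≤ k),
      List.getElem?_eq_none_iff.2 (by omega : M₂.length ≤ k)]
  · obtain ⟨s₁, hs₁⟩ := exists_get? (M := M₁) (t := k) (by omega)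
    obtain ⟨s₂, hs₂⟩ := exists_get? (M := M₂) (t := k) (by omega)
    rw [hs₁, hs₂]
    have ha1 := NA_succ_some hs₁
    have hb1 := NB_succ_some hs₁
    have ha2 := NA_succ_some hs₂
    have hb2 := NB_succ_some hs₂
    have hfa : NA M₁ (k+1) = NA M₁ k ↔ NA M₂ (k+1) = NA M₂ k := by
      rw [PC g₁ hk, PC g₂ hk]
      constructor
      · rintro ⟨r, hr, h⟩; exact ⟨r, hr, by rw [← hal r hr]; exact h⟩
      · rintro ⟨r, hr, h⟩; exact ⟨r, hr, by rw [hal r hr]; exact h⟩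
    have hfb : NB M₁ (k+1) = NB M₁ k ↔ NB M₂ (k+1) = NB M₂ k := by
      rw [QC g₁ hk, QC g₂ hk]
      constructor
      · rintro ⟨r, hr, h⟩; exact ⟨r, hr, by rw [← hbe r hr]; exact h⟩
      · rintro ⟨r, hr, h⟩; exact ⟨r, hr, by rw [hbe r hr]; exact h⟩
    cases s₁ <;> cases s₂ <;> simp [isA, isB] at ha1 hb1 ha2 hb2 <;> first
      | rfl
      | (exfalso; omega)

end Part3

namespace Part4
open ICSbij Part2 Part3
open scoped Classical

variable (m n : ℕ) (I : Finset (Fin m × Fin n))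

/-- top of column `c` of `I` (0 if empty, otherwise max j + 1) -/
def top (c : ℕ) : ℕ := I.sup fun x => if (x.1 : ℕ) = c then (x.2 : ℕ) + 1 else 0

/-- bottom of column `c` -/
noncomputable def low (c : ℕ) : ℕ :=
  sInf {j : ℕ | ∃ x ∈ I, (x.1 : ℕ) = c ∧ (x.2 : ℕ) = j}

def Aseq : ℕ → ℕ := fun k =>
  Nat.rec 0 (fun k' ih => max (top m n I (m - (k' + 1))) ih) k

lemma Aseq_succ (k : ℕ) :
    Aseq m n I (k+1) = max (top m n I (m - (k+1))) (Aseq m n I k) := rfl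

/-- `aa c` = the down-closure column height `max_{c' ≥ c} top c'` -/
def aa (c : ℕ) : ℕ := Aseq m n I (m - c)

noncomputable def bb (c : ℕ) : ℕ :=
  if 0 < top m n I c then low m n I c else aa m n I (c + 1)

noncomputable def al (r : ℕ) : ℕ := aa m n I (m - 1 - r)
noncomputable def be (r : ℕ) : ℕ := bb m n I (m - 1 - r)
noncomputable def pp (r : ℕ) : ℕ := al m n I r + r
noncomputable def qq (r : ℕ) : ℕ := be m n I r + r

noncomputable def MI : List BMStep := List.ofFn (n := m + n) fun k =>
  if ∃ r, r < m ∧ pp m n I r = (k : ℕ) then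
    (if ∃ r, r < m ∧ qq m n I r = (k : ℕ) then .h1 else .d)
  else (if ∃ r, r < m ∧ qq m n I r = (k : ℕ) then .u else .h2)

lemma top_le_n (c : ℕ) : top m n I c ≤ n := by
  apply Finset.sup_le
  intro x _
  split
  · exact x.2.isLt
  · exact Nat.zero_le n

lemma le_top {x : Fin m × Fin n} (hx : x ∈ I) : (x.2 : ℕ) + 1 ≤ top m n I (x.1 : ℕ) := by
  have h := Finset.le_sup (b := x)
    (f := fun y : Fin m × Fin n => if (y.1 : ℕ) = (x.1 : ℕ) then (y.2 : ℕ) + 1 else 0) hx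
  simp only [if_pos rfl] at h
  exact h

lemma top_att {c : ℕ} (h : 0 < top m n I c) :
    ∃ x ∈ I, (x.1 : ℕ) = c ∧ (x.2 : ℕ) + 1 = top m n I c := by
  have hne : I.Nonempty := by
    rcases Finset.eq_empty_or_nonempty I with rfl | hne
    · simp [top] at h
    · exact hne
  obtain ⟨x, hx, hsup⟩ := Finset.exists_mem_eq_sup I hne
    (fun x : Fin m × Fin n => if (x.1 : ℕ) = c then (x.2 : ℕ) + 1 else 0)
  unfold top at h ⊢
  rw [hsup] at h ⊢
  split at h
  · next heq => exact ⟨x, hx, heq, by rw [if_pos heq]⟩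
  · omega

lemma low_mem {c : ℕ} (h : 0 < top m n I c) :
    ∃ x ∈ I, (x.1 : ℕ) = c ∧ (x.2 : ℕ) = low m n I c := by
  obtain ⟨x, hx, hc, _⟩ := top_att m n I h
  exact Nat.sInf_mem (s := {j : ℕ | ∃ x ∈ I, (x.1 : ℕ) = c ∧ (x.2 : ℕ) = j})
    ⟨(x.2 : ℕ), ⟨x, hx, hc, rfl⟩⟩

lemma low_le {x : Fin m × Fin n} (hx : x ∈ I) : low m n I (x.1 : ℕ) ≤ (x.2 : ℕ) :=
  Nat.sInf_le ⟨x, hx, rfl, rfl⟩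

lemma low_lt_top {c : ℕ} (h : 0 < top m n I c) : low m n I c + 1 ≤ top m n I c := by
  obtain ⟨x, hx, hc, hl⟩ := low_mem m n I h
  have := le_top m n I hx
  rw [hc, hl] at this
  exact this

lemma cell_lt {x y : Fin m × Fin n} (h1 : (x.1 : ℕ) ≤ (y.1 : ℕ)) (h2 : (x.2 : ℕ) ≤ (y.2 : ℕ))
    (h3 : (x.1 : ℕ) < (y.1 : ℕ) ∨ (x.2 : ℕ) < (y.2 : ℕ)) : x < y := by
  rcases h3 with h3 | h3
  · exact Prod.lt_iff.mpr (Or.inl ⟨h3, h2⟩)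
  · exact Prod.lt_iff.mpr (Or.inr ⟨h1, h3⟩)

variable {m n I}

lemma S4 (hI : IsIntervalClosed I) {c j : ℕ} (hpos : 0 < top m n I c) (hcm : c < m) (hjn : j < n)
    (h1 : low m n I c ≤ j) (h2 : j + 1 ≤ top m n I c) :
    ((⟨c, hcm⟩ : Fin m), (⟨j, hjn⟩ : Fin n)) ∈ I := by
  obtain ⟨x, hx, hxc, hxl⟩ := low_mem m n I hpos
  obtain ⟨y, hy, hyc, hyt⟩ := top_att m n I hpos
  rcases eq_or_lt_of_le h1 with he | hlow
  · have : ((⟨c, hcm⟩ : Fin m), (⟨j, hjn⟩ : Fin n)) = x := by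
      ext <;> simp <;> omega
    rw [this]; exact hx
  · rcases eq_or_lt_of_le h2 with he | hhigh
    · have : ((⟨c, hcm⟩ : Fin m), (⟨j, hjn⟩ : Fin n)) = y := by
        ext <;> simp <;> omega
      rw [this]; exact hy
    · refine hI x hx y hy _ ?_ ?_
      · exact cell_lt m n (by simp; omega) (by simp; omega) (Or.inr (by simp; omega))
      · exact cell_lt m n (by simp; omega) (by simp; omega) (Or.inr (by simp; omega))

lemma S1 (hI : IsIntervalClosed I) {c c' : ℕ} (hcc : c < c') (h1 : 0 < top m n I c) (h2 : 0 < top m n I c')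
    (hm : c' < m) : top m n I c' ≤ top m n I c := by
  by_contra hcon
  push_neg at hcon
  obtain ⟨x, hx, hxc, hxl⟩ := low_mem m n I h1
  obtain ⟨y, hy, hyc, hyt⟩ := top_att m n I h2
  have hlt := low_lt_top m n I h1
  have htn := top_le_n m n I c'
  have hz : ((⟨c, by omega⟩ : Fin m), (⟨top m n I c' - 1, by omega⟩ : Fin n)) ∈ I := by
    refine hI x hx y hy _ ?_ ?_
    · exact cell_lt m n (by simp; omega) (by simp; omega) (Or.inr (by simp; omega))
    · exact cell_lt m n (by simp; omega) (by simp; omega) (Or.inl (by simp; omega))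
  have := le_top m n I hz
  simp at this
  omega

lemma S2 (hI : IsIntervalClosed I) {c c' : ℕ} (hcc : c < c') (h1 : 0 < top m n I c) (h2 : 0 < top m n I c')
    (hm : c' < m) : low m n I c' ≤ low m n I c := by
  by_contra hcon
  push_neg at hcon
  obtain ⟨x, hx, hxc, hxl⟩ := low_mem m n I h1
  obtain ⟨y, hy, hyc, hyt⟩ := top_att m n I h2
  have hlt := low_lt_top m n I h2
  have htn := top_le_n m n I c'
  have hz : ((⟨c', by omega⟩ : Fin m), (⟨low m n I c, by omega⟩ : Fin n)) ∈ I := by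
    refine hI x hx y hy _ ?_ ?_
    · exact cell_lt m n (by simp; omega) (by simp; omega) (Or.inl (by simp; omega))
    · exact cell_lt m n (by simp; omega) (by simp; omega) (Or.inr (by simp; omega))
  have := low_le m n I hz
  simp at this
  omega

lemma S3 (hI : IsIntervalClosed I) {c c'' : ℕ} (h1 : 0 < top m n I c) (he : top m n I (c+1) = 0)
    (hcc : c + 2 ≤ c'') (h2 : 0 < top m n I c'') (hm : c'' < m) :
    top m n I c'' ≤ low m n I c := by
  by_contra hcon
  push_neg at hcon
  obtain ⟨x, hx, hxc, hxl⟩ := low_mem m n I h1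
  obtain ⟨y, hy, hyc, hyt⟩ := top_att m n I h2
  have htn := top_le_n m n I c''
  have hz : ((⟨c + 1, by omega⟩ : Fin m), (⟨low m n I c, by omega⟩ : Fin n)) ∈ I := by
    refine hI x hx y hy _ ?_ ?_
    · exact cell_lt m n (by simp; omega) (by simp; omega) (Or.inl (by simp; omega))
    · exact cell_lt m n (by simp; omega) (by simp; omega) (Or.inl (by simp; omega))
  have := le_top m n I hz
  simp at this
  omega

lemma aa_of_ge {c : ℕ} (h : m ≤ c) : aa m n I c = 0 := by
  unfold aa
  rw [show m - c = 0 from by omega]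
  rfl

lemma aa_succ {c : ℕ} (h : c < m) :
    aa m n I c = max (top m n I c) (aa m n I (c+1)) := by
  unfold aa
  rw [show m - c = (m - (c+1)) + 1 from by omega, Aseq_succ,
    show m - (m - (c + 1) + 1) = c from by omega]

lemma top_le_aa {c : ℕ} (h : c < m) : top m n I c ≤ aa m n I c := by
  rw [aa_succ h]; exact le_max_left _ _

lemma aa_anti_adj (c : ℕ) : aa m n I (c+1) ≤ aa m n I c := by
  rcases lt_or_ge c m with h | h
  · rw [aa_succ h]; exact le_max_right _ _
  · rw [aa_of_ge h, aa_of_ge (by omega)]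

lemma aa_anti {c c' : ℕ} (h : c ≤ c') : aa m n I c' ≤ aa m n I c := by
  induction c' , h using Nat.le_induction with
  | base => exact le_rfl
  | succ c' hc ih => exact le_trans (aa_anti_adj c') ih

lemma aa_le_n (c : ℕ) : aa m n I c ≤ n := by
  suffices h : ∀ k, Aseq m n I k ≤ n from h _
  intro k
  induction k with
  | zero => exact Nat.zero_le n
  | succ k ih =>
      rw [Aseq_succ]
      exact max_le (top_le_n m n I _) ih

lemma aa_att : ∀ d c, m - c = d →
    (aa m n I c = 0 ∨ ∃ c', c ≤ c' ∧ c' < m ∧ 0 < top m n I c' ∧ top m n I c' = aa m n I c) := by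
  intro d
  induction d with
  | zero => intro c hc; left; exact aa_of_ge (by omega)
  | succ d ih =>
      intro c hc
      have hcm : c < m := by omega
      rcases le_total (aa m n I (c+1)) (top m n I c) with h | h
      · rcases Nat.eq_zero_or_pos (top m n I c) with h0 | h0
        · left; rw [aa_succ hcm]; omega
        · right
          exact ⟨c, le_rfl, hcm, h0, by rw [aa_succ hcm]; omega⟩
      · have heq : aa m n I c = aa m n I (c+1) := by rw [aa_succ hcm]; omega
        rcases ih (c+1) (by omega) with h0 | ⟨c', hc1, hc2, hc3, hc4⟩
        · left; omega
        · right; exact ⟨c', by omega, hc2, hc3, by omega⟩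

lemma bb_le_aa {c : ℕ} (h : c < m) : bb m n I c ≤ aa m n I c := by
  unfold bb
  split
  · next hpos =>
      have := low_lt_top m n I hpos
      have := top_le_aa (I := I) h
      omega
  · exact aa_anti_adj c

lemma bb_anti_adj (hI : IsIntervalClosed I) {c : ℕ} (h : c + 1 < m) :
    bb m n I (c+1) ≤ bb m n I c := by
  unfold bb
  by_cases h1 : 0 < top m n I c <;> by_cases h2 : 0 < top m n I (c+1)
  · rw [if_pos h1, if_pos h2]
    exact S2 hI (by omega) h1 h2 h
  · rw [if_pos h1, if_neg h2]
    rcases aa_att (m - (c+2)) (c+2) rfl with h0 | ⟨c', hc1, hc2, hc3, hc4⟩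
    · rw [h0]; exact Nat.zero_le _
    · rw [← hc4]
      exact S3 hI h1 (by omega) hc1 hc3 hc2
  · rw [if_neg h1, if_pos h2]
    have := low_lt_top m n I h2
    have := top_le_aa (I := I) h
    omega
  · rw [if_neg h1, if_neg h2]
    exact aa_anti (by omega)

lemma bb_anti (hI : IsIntervalClosed I) {c c' : ℕ} (h : c ≤ c') (h' : c' < m) :
    bb m n I c' ≤ bb m n I c := by
  induction c', h using Nat.le_induction with
  | base => exact le_rfl
  | succ c'' hc ih =>
      exact le_trans (bb_anti_adj hI h') (ih (by omega))

lemma be_le_al {r : ℕ} (h : r < m) : be m n I r ≤ al m n I r :=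
  bb_le_aa (by omega)

lemma al_mono {r r' : ℕ} (h : r ≤ r') : al m n I r ≤ al m n I r' :=
  aa_anti (by omega)

lemma be_mono (hI : IsIntervalClosed I) {r r' : ℕ} (h : r ≤ r') (h' : r' < m) :
    be m n I r ≤ be m n I r' :=
  bb_anti hI (by omega) (by omega)

lemma al_le_n (r : ℕ) : al m n I r ≤ n := aa_le_n _

lemma pp_lt_pp {r r' : ℕ} (h : r < r') : pp m n I r < pp m n I r' := by
  have := al_mono (I := I) (le_of_lt h)
  unfold pp; omega

lemma qq_lt_qq (hI : IsIntervalClosed I) {r r' : ℕ} (h : r < r') (h' : r' < m) :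
    qq m n I r < qq m n I r' := by
  have := be_mono hI (le_of_lt h) h'
  unfold qq; omega

lemma qq_le_pp {r : ℕ} (h : r < m) : qq m n I r ≤ pp m n I r := by
  have := be_le_al (I := I) h
  unfold pp qq; omega

lemma pp_lt_L {r : ℕ} (h : r < m) : pp m n I r < m + n := by
  have := al_le_n (I := I) (n := n) r
  unfold pp; omega

lemma qq_lt_L {r : ℕ} (h : r < m) : qq m n I r < m + n :=
  lt_of_le_of_lt (qq_le_pp h) (pp_lt_L h)

end Part4

namespace Part4
open ICSbij Part2 Part3
open scoped Classical

variable {m n : ℕ} {I : Finset (Fin m × Fin n)}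

noncomputable def PAI (m n : ℕ) (I : Finset (Fin m × Fin n)) (t : ℕ) : ℕ :=
  ((Finset.range m).filter fun r => pp m n I r < t).card
noncomputable def QBI (m n : ℕ) (I : Finset (Fin m × Fin n)) (t : ℕ) : ℕ :=
  ((Finset.range m).filter fun r => qq m n I r < t).card

lemma PAI_zero : PAI m n I 0 = 0 := by
  unfold PAI
  rw [Finset.filter_false_of_mem (fun r _ => by omega)]
  rfl
lemma QBI_zero : QBI m n I 0 = 0 := by
  unfold QBI
  rw [Finset.filter_false_of_mem (fun r _ => by omega)]
  rfl

lemma card_filter_eq_succ {f : ℕ → ℕ} (hmono : ∀ {r r' : ℕ}, r < r' → f r < f r') (t : ℕ) :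
    ((Finset.range m).filter fun r => f r < t + 1).card =
    ((Finset.range m).filter fun r => f r < t).card +
      (if ∃ r, r < m ∧ f r = t then 1 else 0) := by
  have hsplit : ((Finset.range m).filter fun r => f r < t + 1) =
      ((Finset.range m).filter fun r => f r < t) ∪
      ((Finset.range m).filter fun r => f r = t) := by
    ext r
    simp only [Finset.mem_filter, Finset.mem_union, Finset.mem_range]
    omega
  rw [hsplit, Finset.card_union_of_disjoint]
  · congr 1
    split
    · next h =>
        obtain ⟨r₀, hr₀, hf⟩ := h
        rw [show ((Finset.range m).filter fun r => f r = t) = {r₀} from ?_]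
        · exact Finset.card_singleton r₀
        · ext r
          simp only [Finset.mem_filter, Finset.mem_range, Finset.mem_singleton]
          constructor
          · rintro ⟨hrm, hr⟩
            rcases lt_trichotomy r r₀ with h' | h' | h'
            · have := hmono h'; omega
            · exact h'
            · have := hmono h'; omega
          · rintro rfl; exact ⟨hr₀, hf⟩
    · next h =>
        push_neg at h
        rw [Finset.filter_false_of_mem]
        · rfl
        · intro r hr
          simp only [Finset.mem_range] at hr
          exact h r hr
  · rw [Finset.disjoint_left]
    intro r h1 h2
    simp only [Finset.mem_filter] at h1 h2
    omega

lemma PAI_succ (t : ℕ) :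
    PAI m n I (t+1) = PAI m n I t + (if ∃ r, r < m ∧ pp m n I r = t then 1 else 0) :=
  card_filter_eq_succ (fun h => pp_lt_pp h) t

lemma QBI_succ (hI : IsIntervalClosed I) (t : ℕ) :
    QBI m n I (t+1) = QBI m n I t + (if ∃ r, r < m ∧ qq m n I r = t then 1 else 0) := by
  unfold QBI
  have hsplit : ((Finset.range m).filter fun r => qq m n I r < t + 1) =
      ((Finset.range m).filter fun r => qq m n I r < t) ∪
      ((Finset.range m).filter fun r => qq m n I r = t) := by
    ext r
    simp only [Finset.mem_filter, Finset.mem_union, Finset.mem_range]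
    omega
  rw [hsplit, Finset.card_union_of_disjoint]
  · congr 1
    split
    · next h =>
        obtain ⟨r₀, hr₀, hf⟩ := h
        rw [show ((Finset.range m).filter fun r => qq m n I r = t) = {r₀} from ?_]
        · exact Finset.card_singleton r₀
        · ext r
          simp only [Finset.mem_filter, Finset.mem_range, Finset.mem_singleton]
          constructor
          · rintro ⟨hrm, hr⟩
            rcases lt_trichotomy r r₀ with h' | h' | h'
            · have := qq_lt_qq hI h' hr₀; omega
            · exact h'
            · have := qq_lt_qq hI h' hrm; omega
          · rintro rfl; exact ⟨hr₀, hf⟩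
    · next h =>
        push_neg at h
        rw [Finset.filter_false_of_mem]
        · rfl
        · intro r hr
          simp only [Finset.mem_range] at hr
          exact h r hr
  · rw [Finset.disjoint_left]
    intro r h1 h2
    simp only [Finset.mem_filter] at h1 h2
    omega

lemma length_MI : (MI m n I).length = m + n := by
  simp [MI]

lemma get_MI {k : ℕ} (hk : k < m + n) :
    (MI m n I)[k]? = some (
      if ∃ r, r < m ∧ pp m n I r = k then
        (if ∃ r, r < m ∧ qq m n I r = k then .h1 else .d)
      else (if ∃ r, r < m ∧ qq m n I r = k then .u else .h2)) := by
  unfold MI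
  simp [List.getElem?_ofFn, hk]

lemma key_cnt (hI : IsIntervalClosed I) :
    ∀ t, t ≤ m + n → NA (MI m n I) t + PAI m n I t = t ∧
      NB (MI m n I) t + QBI m n I t = t := by
  intro t
  induction t with
  | zero => intro _; rw [NA_zero, NB_zero, PAI_zero, QBI_zero]; omega
  | succ t ih =>
      intro ht
      obtain ⟨ihA, ihB⟩ := ih (by omega)
      have hg := get_MI (m := m) (n := n) (I := I) (k := t) (by omega)
      have hA := NA_succ_some hg
      have hB := NB_succ_some hg
      rw [PAI_succ, QBI_succ hI]
      by_cases hp : ∃ r, r < m ∧ pp m n I r = t <;>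
        by_cases hq : ∃ r, r < m ∧ qq m n I r = t <;>
          simp only [hp, hq, if_pos, if_neg, if_true, if_false] at hA hB ⊢ <;>
            simp [isA, isB] at hA hB <;> omega

lemma PAI_full : PAI m n I (m + n) = m := by
  unfold PAI
  rw [Finset.filter_true_of_mem]
  · exact Finset.card_range m
  · intro r hr
    simp only [Finset.mem_range] at hr
    exact pp_lt_L hr

lemma QBI_full : QBI m n I (m + n) = m := by
  unfold QBI
  rw [Finset.filter_true_of_mem]
  · exact Finset.card_range m
  · intro r hr
    simp only [Finset.mem_range] at hr
    exact qq_lt_L hr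

lemma PAI_le (t : ℕ) : PAI m n I t ≤ m := by
  unfold PAI
  calc _ ≤ (Finset.range m).card := Finset.card_le_card (Finset.filter_subset _ _)
  _ = m := Finset.card_range m
lemma QBI_le (t : ℕ) : QBI m n I t ≤ m := by
  unfold QBI
  calc _ ≤ (Finset.range m).card := Finset.card_le_card (Finset.filter_subset _ _)
  _ = m := Finset.card_range m

lemma PAI_le_QBI (t : ℕ) : PAI m n I t ≤ QBI m n I t := by
  apply Finset.card_le_card
  intro r hr
  simp only [Finset.mem_filter, Finset.mem_range] at hr ⊢
  have := qq_le_pp (I := I) (n := n) hr.1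
  omega

lemma good_MI (hI : IsIntervalClosed I) : Good m n (MI m n I) := by
  have hble : ∀ t, NB (MI m n I) t ≤ NA (MI m n I) t := by
    intro t
    rcases le_or_gt t (m+n) with ht | ht
    · obtain ⟨h1, h2⟩ := key_cnt hI t ht
      have := PAI_le_QBI (I := I) (n := n) t
      omega
    · have hA := NA_stable (MI m n I) (t := t) (by rw [length_MI]; omega)
      have hB := NB_stable (MI m n I) (t := t) (by rw [length_MI]; omega)
      rw [hA, hB, length_MI]
      obtain ⟨h1, h2⟩ := key_cnt hI (m+n) le_rfl
      have := PAI_le_QBI (I := I) (n := n) (m+n)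
      omega
  have hnaL : NA (MI m n I) (m+n) = n := by
    obtain ⟨h1, _⟩ := key_cnt hI (m+n) le_rfl
    have := PAI_full (I := I) (n := n)
    omega
  have hnbL : NB (MI m n I) (m+n) = n := by
    obtain ⟨_, h2⟩ := key_cnt hI (m+n) le_rfl
    have := QBI_full (I := I) (n := n)
    omega
  refine ⟨length_MI, hnaL, hnbL, hble, ?_⟩
  -- NoH2ThenH1
  rintro k ⟨hh, h2, h1⟩
  have hk : k + 1 < m + n := by
    by_contra hc
    push_neg at hc
    have : (MI m n I)[k+1]? = none :=
      List.getElem?_eq_none_iff.2 (by rw [length_MI]; omega)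
    rw [this] at h1
    exact Option.noConfusion rfl (heq_of_eq h1)
  -- k is neither a pp- nor a qq-position
  have hgk := get_MI (m := m) (n := n) (I := I) (k := k) (by omega)
  rw [hgk] at h2
  have hp : ¬ ∃ r, r < m ∧ pp m n I r = k := by
    intro hcon
    rw [if_pos hcon] at h2
    split at h2 <;> exact BMStep.noConfusion (Option.some.inj h2)
  have hq : ¬ ∃ r, r < m ∧ qq m n I r = k := by
    intro hcon
    rw [if_neg hp, if_pos hcon] at h2
    exact BMStep.noConfusion (Option.some.inj h2)
  -- k+1 is both a pp- and a qq-position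
  have hgk1 := get_MI (m := m) (n := n) (I := I) (k := k+1) hk
  rw [hgk1] at h1
  have hp1 : ∃ r, r < m ∧ pp m n I r = k + 1 := by
    by_contra hcon
    rw [if_neg hcon] at h1
    split at h1 <;> exact BMStep.noConfusion (Option.some.inj h1)
  have hq1 : ∃ r, r < m ∧ qq m n I r = k + 1 := by
    by_contra hcon
    rw [if_pos hp1, if_neg hcon] at h1
    exact BMStep.noConfusion (Option.some.inj h1)
  obtain ⟨s, hsm, hps⟩ := hp1
  obtain ⟨s', hsm', hqs⟩ := hq1
  -- heights equal at k
  have hNAB : NA (MI m n I) k = NB (MI m n I) k := by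
    have := hgt_eq (MI m n I) k
    omega
  have hPQ : PAI m n I k = QBI m n I k := by
    obtain ⟨c1, c2⟩ := key_cnt hI k (by omega)
    omega
  -- s = PAI (k+1) and s' = QBI (k+1)
  have hsPA : PAI m n I (k+1) = s := by
    unfold PAI
    rw [show ((Finset.range m).filter fun r => pp m n I r < k + 1) = Finset.range s from ?_]
    · exact Finset.card_range s
    · ext r
      simp only [Finset.mem_filter, Finset.mem_range]
      constructor
      · rintro ⟨hrm, hr⟩
        by_contra hc
        push_neg at hc
        rcases eq_or_lt_of_le hc with rfl | h'
        · omega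
        · have := pp_lt_pp (I := I) (n := n) h'; omega
      · intro hr
        exact ⟨by omega, by have := pp_lt_pp (I := I) (n := n) hr; omega⟩
  have hsQB : QBI m n I (k+1) = s' := by
    unfold QBI
    rw [show ((Finset.range m).filter fun r => qq m n I r < k + 1) = Finset.range s' from ?_]
    · exact Finset.card_range s'
    · ext r
      simp only [Finset.mem_filter, Finset.mem_range]
      constructor
      · rintro ⟨hrm, hr⟩
        by_contra hc
        push_neg at hc
        rcases eq_or_lt_of_le hc with rfl | h'
        · omega
        · have := qq_lt_qq hI h' hrm; omega
      · intro hr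
        exact ⟨by omega, by have := qq_lt_qq hI hr hsm'; omega⟩
  have hPk1 : PAI m n I (k+1) = PAI m n I k := by
    rw [PAI_succ, if_neg hp]; omega
  have hQk1 : QBI m n I (k+1) = QBI m n I k := by
    rw [QBI_succ hI, if_neg hq]; omega

  have hss : s = s' := by omega
  subst hss
  -- now al s = be s, column m-1-s must be empty and the propagation gives a contradiction
  have halbe : al m n I s = be m n I s := by
    unfold pp at hps; unfold qq at hqs; omega
  rcases Nat.eq_zero_or_pos (top m n I (m - 1 - s)) with htop | htop
  · -- empty column
    have hals : al m n I s = aa m n I (m - 1 - s + 1) := by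
      unfold al
      rw [aa_succ (by omega), htop]
      exact Nat.zero_max _
    rcases Nat.eq_zero_or_pos s with rfl | hs1
    · -- s = 0 : al 0 = 0 but pp 0 = k+1 ≥ 1
      have : aa m n I (m - 1 - 0 + 1) = 0 := aa_of_ge (by omega)
      unfold pp at hps
      omega
    · -- s ≥ 1 : pp (s-1) = k, contradicting hp
      apply hp
      refine ⟨s - 1, by omega, ?_⟩
      have : al m n I (s-1) = aa m n I (m - 1 - s + 1) := by
        unfold al
        congr 1
        omega
      unfold pp at hps ⊢
      omega
  · -- nonempty column: be < al, contradiction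
    have h1' : be m n I s = low m n I (m - 1 - s) := by
      unfold be bb
      rw [if_pos htop]
    have h2' := low_lt_top m n I htop
    have h3' : top m n I (m - 1 - s) ≤ al m n I s := top_le_aa (by omega)
    omega

end Part4

namespace Part4
open ICSbij Part2 Part3
open scoped Classical

variable {m n : ℕ} {I : Finset (Fin m × Fin n)}

lemma PAI_pp {s : ℕ} (hs : s < m) : PAI m n I (pp m n I s) = s := by
  unfold PAI
  rw [show ((Finset.range m).filter fun r => pp m n I r < pp m n I s) = Finset.range s from ?_]
  · exact Finset.card_range s
  · ext r
    simp only [Finset.mem_filter, Finset.mem_range]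
    constructor
    · rintro ⟨hrm, hr⟩
      by_contra hc
      push_neg at hc
      rcases eq_or_lt_of_le hc with rfl | h'
      · omega
      · have := pp_lt_pp (I := I) (n := n) h'; omega
    · intro hr
      exact ⟨by omega, pp_lt_pp hr⟩

lemma alM_MI (hI : IsIntervalClosed I) {r : ℕ} (hr : r < m) :
    alM (MI m n I) n r = al m n I r := by
  have halen := al_le_n (I := I) (m := m) r
  apply Nat.findGreatest_eq_iff.mpr
  refine ⟨halen, ?_, ?_⟩
  · intro _
    show al m n I r ≤ NA (MI m n I) (r + al m n I r)
    have hpl := pp_lt_L (I := I) (n := n) hr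
    obtain ⟨h1, _⟩ := key_cnt hI (pp m n I r) (by omega)
    have h2 := PAI_pp (I := I) (n := n) hr
    have : r + al m n I r = pp m n I r := by unfold pp; omega
    rw [this]
    omega
  · intro v hv hvn
    intro hcon
    have hle : r + v ≤ m + n := by omega
    obtain ⟨h1, _⟩ := key_cnt hI (r + v) hle
    have hsub : Finset.range (r+1) ⊆ (Finset.range m).filter fun r' => pp m n I r' < r + v := by
      intro r' hr'
      simp only [Finset.mem_range] at hr'
      simp only [Finset.mem_filter, Finset.mem_range]
      refine ⟨by omega, ?_⟩
      have : al m n I r' ≤ al m n I r := al_mono (by omega)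
      unfold pp
      omega
    have hcard := Finset.card_le_card hsub
    rw [Finset.card_range] at hcard
    have : PAI m n I (r + v) ≥ r + 1 := hcard
    omega

lemma exists_ge_of_card {t r : ℕ} (h : r + 1 ≤ QBI m n I t) :
    ∃ r', r' < m ∧ qq m n I r' < t ∧ r ≤ r' := by
  by_contra hc
  push_neg at hc
  have hsub : ((Finset.range m).filter fun r' => qq m n I r' < t) ⊆ Finset.range r := by
    intro r' hr'
    simp only [Finset.mem_filter, Finset.mem_range] at hr' ⊢
    exact hc r' hr'.1 hr'.2
  have hh := Finset.card_le_card hsub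
  rw [Finset.card_range] at hh
  have hQe : QBI m n I t =
      ((Finset.range m).filter fun r' => qq m n I r' < t).card := rfl
  omega

lemma beM_MI (hI : IsIntervalClosed I) {r : ℕ} (hr : r < m) :
    beM (MI m n I) r = be m n I r := by
  have g := good_MI hI
  have hben : be m n I r ≤ n := le_trans (be_le_al hr) (al_le_n r)
  have hiff : ∀ j, NB (MI m n I) (r + 1 + j) ≤ j ↔ be m n I r ≤ j := by
    intro j
    rcases le_or_gt n j with hj | hj
    · constructor
      · intro _; omega
      · intro _; exact le_trans (g.nb_le_n _) hj
    · have hle : r + 1 + j ≤ m + n := by omega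
      obtain ⟨_, h2⟩ := key_cnt hI (r + 1 + j) hle
      constructor
      · intro hnb
        have hQ : r + 1 ≤ QBI m n I (r + 1 + j) := by omega
        obtain ⟨r', hr'm, hr'q, hr'ge⟩ := exists_ge_of_card hQ
        have := be_mono hI hr'ge hr'm
        unfold qq at hr'q
        omega
      · intro hbe
        have hsub : Finset.range (r+1) ⊆
            (Finset.range m).filter fun r' => qq m n I r' < r + 1 + j := by
          intro r' hr'
          simp only [Finset.mem_range] at hr'
          simp only [Finset.mem_filter, Finset.mem_range]
          refine ⟨by omega, ?_⟩
          have : be m n I r' ≤ be m n I r := be_mono hI (by omega) hr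
          unfold qq
          omega
        have hcard := Finset.card_le_card hsub
        rw [Finset.card_range] at hcard
        have hQe : QBI m n I (r + 1 + j) =
            ((Finset.range m).filter fun r' => qq m n I r' < r + 1 + j).card := rfl
        omega
  apply le_antisymm
  · exact Nat.sInf_le ((hiff _).mpr le_rfl)
  · exact le_csInf ⟨n, (hiff n).mpr hben⟩ (fun b hb => (hiff b).mp hb)

lemma col_iff (hI : IsIntervalClosed I) (i : Fin m) (j : Fin n) :
    (be m n I (m - 1 - (i : ℕ)) ≤ (j : ℕ) ∧
      (j : ℕ) + 1 ≤ al m n I (m - 1 - (i : ℕ))) ↔ (i, j) ∈ I := by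
  have him : (i : ℕ) < m := i.isLt
  have hjn : (j : ℕ) < n := j.isLt
  have hidx : m - 1 - (m - 1 - (i : ℕ)) = (i : ℕ) := by omega
  have hal : al m n I (m - 1 - (i : ℕ)) = aa m n I (i : ℕ) := by
    unfold al; rw [hidx]
  have hbe : be m n I (m - 1 - (i : ℕ)) = bb m n I (i : ℕ) := by
    unfold be; rw [hidx]
  rw [hal, hbe]
  constructor
  · rintro ⟨h1, h2⟩
    rcases Nat.eq_zero_or_pos (top m n I (i : ℕ)) with htop | htop
    · exfalso
      have hbb : bb m n I (i : ℕ) = aa m n I ((i : ℕ) + 1) := by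
        unfold bb; rw [if_neg (by omega)]
      have haa : aa m n I (i : ℕ) = aa m n I ((i : ℕ) + 1) := by
        rw [aa_succ him, htop]; exact Nat.zero_max _
      omega
    · have hbb : bb m n I (i : ℕ) = low m n I (i : ℕ) := by
        unfold bb; rw [if_pos htop]
      have htopaa : aa m n I (i : ℕ) = top m n I (i : ℕ) := by
        rw [aa_succ him]
        rcases aa_att (m - ((i:ℕ)+1)) ((i:ℕ)+1) rfl with h0 | ⟨c', hc1, hc2, hc3, hc4⟩
        · rw [h0]; exact max_eq_left (Nat.zero_le _)
        · have := S1 hI (show (i:ℕ) < c' by omega) htop hc3 hc2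
          exact max_eq_left (by omega)
      have hS4 := S4 hI htop him hjn (by omega) (by omega)
      simpa using hS4
  · intro hmem
    have htopc : (j : ℕ) + 1 ≤ top m n I (i : ℕ) := le_top m n I hmem
    have htop : 0 < top m n I (i : ℕ) := by omega
    have hbb : bb m n I (i : ℕ) = low m n I (i : ℕ) := by
      unfold bb; rw [if_pos htop]
    have hlow : low m n I (i : ℕ) ≤ (j : ℕ) := low_le m n I hmem
    have htopaa := top_le_aa (I := I) him
    constructor
    · omega
    · omega

lemma decode_MI (hI : IsIntervalClosed I) : decode m n (MI m n I) = I := by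
  have g := good_MI hI
  ext x
  obtain ⟨i, j⟩ := x
  rw [mem_decode_iff g i j]
  have him : (i : ℕ) < m := i.isLt
  rw [alM_MI hI (by omega), beM_MI hI (by omega)]
  exact col_iff hI i j

end Part4

/-- The interval-closed sets of `[m] × [n]` are in bijection with bicolored Motzkin
paths with `#u + #h₁ = m`, `#d + #h₂ = n`, and no `h₂` on the x-axis immediately
followed by an `h₁`. -/
theorem ics_equiv_bicolored_motzkin (m n : ℕ) :
    Nonempty ({I : Finset (Fin m × Fin n) // IsIntervalClosed I} ≃
      {M : List BMStep // IsBMPath M ∧ NoH2ThenH1 M ∧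
        M.count BMStep.u + M.count BMStep.h1 = m ∧
        M.count BMStep.d + M.count BMStep.h2 = n}) := by
  constructor
  refine Equiv.symm (Equiv.ofBijective
    (fun Mc => ⟨Part2.decode m n Mc.1, Part2.decode_ics m n Mc.1⟩) ⟨?_, ?_⟩)
  · intro M₁ M₂ h
    have g₁ := (ICSbij.good_iff m n M₁.1).mp M₁.2
    have g₂ := (ICSbij.good_iff m n M₂.1).mp M₂.2
    exact Subtype.ext (Part3.decode_inj g₁ g₂ (congrArg Subtype.val h))
  · rintro ⟨I, hI⟩
    exact ⟨⟨Part4.MI m n I, (ICSbij.good_iff m n _).mpr (Part4.good_MI hI)⟩,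
      Subtype.ext (Part4.decode_MI hI)⟩
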